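/- Let d ≥ 1 and r ≥ 1 be integers and let X be a finite set of points in ℝ^d with (d+1)(r-1)+1 ≤ |X| ≤ (d+1)r. Then X can be partitioned into r pairwise disjoint sets X_1, …, X_r, each of size at most d+1, whose convex hulls all have a point in common. -/

import Mathlib

open Finset Metric
open scoped RealInnerProductSpace

section ColorfulCaratheodory

variable {E : Type*} [NormedAddCommGroup E] [InnerProductSpace ℝ E] [FiniteDimensional ℝ E]

/-- Extract weights indexed by the original fintype from convex-hull membership. -/
lemma exists_weights_of_mem_convexHull_range {ι : Type*} [Fintype ι] [DecidableEq ι]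
    {g : ι → E} {x : E} (h : x ∈ convexHull ℝ (Set.range g)) :
    ∃ w : ι → ℝ, (∀ i, 0 ≤ w i) ∧ ∑ i, w i = 1 ∧ ∑ i, w i • g i = x := by
  classical
  rw [mem_convexHull_iff_exists_fintype] at h
  obtain ⟨κ, hκ, μ, z, hμ0, hμ1, hz, hx⟩ := h
  choose σ hσ using hz
  refine ⟨fun i => ∑ k ∈ univ.filter (fun k => σ k = i), μ k, ?_, ?_, ?_⟩
  · intro i; exact Finset.sum_nonneg fun k _ => hμ0 k
  · rw [← hμ1]; exact Finset.sum_fiberwise _ _ _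
  · rw [← hx]
    rw [← Finset.sum_fiberwise univ σ (fun k => μ k • z k)]
    refine Finset.sum_congr rfl fun i _ => ?_
    rw [Finset.sum_smul]
    refine Finset.sum_congr rfl fun k hk => ?_
    rw [Finset.mem_filter] at hk
    rw [← hk.2, hσ]

set_option maxHeartbeats 1000000 in
/-- Bárány's colorful Carathéodory theorem. -/
theorem colorful_caratheodory {n : ℕ} (hn : Module.finrank ℝ E ≤ n)
    (S : Fin (n + 1) → Finset E) (h0 : ∀ i, (0 : E) ∈ convexHull ℝ (S i : Set E)) :
    ∃ g : Fin (n + 1) → E, (∀ i, g i ∈ S i) ∧ (0 : E) ∈ convexHull ℝ (Set.range g) := by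
  classical
  have hSne : ∀ i, (S i).Nonempty := fun i => by
    have := h0 i
    have h1 : (convexHull ℝ (S i : Set E)).Nonempty := ⟨0, this⟩
    rw [convexHull_nonempty_iff] at h1
    exact Finset.coe_nonempty.mp h1
  obtain ⟨g, hgT, hgmin⟩ := Finset.exists_min_image (Fintype.piFinset S)
    (fun g => infDist 0 (convexHull ℝ (Set.range g)))
    (Fintype.piFinset_nonempty.mpr hSne)
  have hgS : ∀ i, g i ∈ S i := Fintype.mem_piFinset.mp hgT
  refine ⟨g, hgS, ?_⟩
  by_contra h0g
  set K := convexHull ℝ (Set.range g) with hK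
  have hKconv : Convex ℝ K := convex_convexHull ℝ _
  have hKcpt : IsCompact K := (Set.finite_range g).isCompact_convexHull ℝ
  have hKne : K.Nonempty := ⟨g 0, subset_convexHull ℝ _ ⟨0, rfl⟩⟩
  set δ := infDist (0 : E) K with hδ
  have hδpos : 0 < δ := (hKcpt.isClosed.notMem_iff_infDist_pos hKne).1 h0g
  obtain ⟨p, hpK, hpd⟩ := hKcpt.exists_infDist_eq_dist hKne 0
  have hpnorm : ‖p‖ = δ := by rw [hδ, hpd, dist_zero_left]
  have hiInf : ‖(0 : E) - p‖ = ⨅ w : K, ‖(0 : E) - w‖ := by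
    rw [zero_sub, norm_neg, hpnorm, hδ, infDist_eq_iInf]
    congr 1; funext w; rw [dist_zero_left, zero_sub, norm_neg]
  have hproj : ∀ w ∈ K, ‖p‖ ^ 2 ≤ ⟪p, w⟫ := by
    intro w hw
    have h := (norm_eq_iInf_iff_real_inner_le_zero hKconv hpK).1 hiInf w hw
    rw [zero_sub, inner_neg_left, inner_sub_right] at h
    have h2 : ⟪p, p⟫ ≤ ⟪p, w⟫ := by linarith
    rwa [real_inner_self_eq_norm_sq] at h2
  obtain ⟨w, hw0, hw1, hwc⟩ := exists_weights_of_mem_convexHull_range hpK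
  have drop : ∀ (w : Fin (n + 1) → ℝ) (i₀ : Fin (n + 1)), (∀ i, 0 ≤ w i) →
      ∑ i, w i = 1 → ∑ i, w i • g i = p → w i₀ = 0 →
      p ∈ convexHull ℝ (g '' {i | i ≠ i₀}) := by
    intro w i₀ hw0 hw1 hwc hz
    have hsum : ∑ i ∈ univ.erase i₀, w i = 1 := by
      rw [Finset.sum_erase _ hz]; exact hw1
    have hsmul : ∑ i ∈ univ.erase i₀, w i • g i = p := by
      rw [Finset.sum_erase _ (by rw [hz, zero_smul])]; exact hwc
    have := Finset.centerMass_mem_convexHull (univ.erase i₀) (w := w) (z := g)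
      (fun i _ => hw0 i) (by rw [hsum]; norm_num)
      (fun i hi => Set.mem_image_of_mem g (Finset.mem_erase.mp hi).1)
    rwa [Finset.centerMass_eq_of_sum_1 _ _ hsum, hsmul] at this
  have claim : ∃ i₀, p ∈ convexHull ℝ (g '' {i | i ≠ i₀}) := by
    by_cases hz : ∃ i₀, w i₀ = 0
    · obtain ⟨i₀, hi₀⟩ := hz; exact ⟨i₀, drop w i₀ hw0 hw1 hwc hi₀⟩
    push_neg at hz
    have hwpos : ∀ i, 0 < w i := fun i => (hw0 i).lt_of_ne (Ne.symm (hz i))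
    by_cases haff : AffineIndependent ℝ g
    · exfalso
      have hcard : Fintype.card (Fin (n + 1)) = Module.finrank ℝ E + 1 := by
        have hle := haff.card_le_finrank_succ
        have hle2 := Submodule.finrank_le (vectorSpan ℝ (Set.range g))
        rw [Fintype.card_fin] at hle ⊢
        omega
      have htop : affineSpan ℝ (Set.range g) = ⊤ :=
        haff.affineSpan_eq_top_iff_card_eq_finrank_add_one.2 hcard
      have h0span : (0 : E) ∈ affineSpan ℝ (Set.range g) := by rw [htop]; trivial
      obtain ⟨c, hc1, hc0⟩ := eq_affineCombination_of_mem_affineSpan_of_fintype h0span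
      have hc0' : ∑ i, c i • g i = 0 := by
        rw [← Finset.affineCombination_eq_linear_combination _ _ _ hc1, ← hc0]
      set B := (univ : Finset (Fin (n + 1))).sup' ⟨0, mem_univ 0⟩ (fun i => |c i - w i|) with hB
      have hBnn : 0 ≤ B :=
        le_trans (abs_nonneg _) (Finset.le_sup' (fun i => |c i - w i|) (mem_univ 0))
      set wm := (univ : Finset (Fin (n + 1))).inf' ⟨0, mem_univ 0⟩ w with hwm
      have hwmpos : 0 < wm := by
        obtain ⟨i, _, hi⟩ := Finset.exists_mem_eq_inf' ⟨0, mem_univ 0⟩ w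
        rw [hwm, hi]; exact hwpos i
      set t := wm / (B + wm) with ht
      have htpos : 0 < t := div_pos hwmpos (by linarith)
      have htle : t ≤ 1 := by
        rw [ht, div_le_one (by linarith)]; linarith
      have hnn : ∀ i, 0 ≤ (1 - t) * w i + t * c i := by
        intro i
        have h1 : |c i - w i| ≤ B := Finset.le_sup' (fun i => |c i - w i|) (mem_univ i)
        have h2 : wm ≤ w i := Finset.inf'_le _ (mem_univ i)
        have h3 : t * B ≤ wm := by
          rw [ht, div_mul_eq_mul_div, div_le_iff₀ (by linarith : (0:ℝ) < B + wm)]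
          nlinarith
        have h4 := abs_le.mp h1
        nlinarith
      have hq : ((1 - t) • p : E) ∈ K := by
        rw [hK]
        apply mem_convexHull_of_exists_fintype (fun i => (1 - t) * w i + t * c i) g hnn
        · rw [Finset.sum_add_distrib, ← Finset.mul_sum, ← Finset.mul_sum, hw1, hc1]; ring
        · exact fun i => ⟨i, rfl⟩
        · have hsplit : ∑ i, ((1 - t) * w i + t * c i) • g i
              = (1 - t) • ∑ i, w i • g i + t • ∑ i, c i • g i := by
            rw [Finset.smul_sum, Finset.smul_sum, ← Finset.sum_add_distrib]
            refine Finset.sum_congr rfl fun i _ => ?_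
            rw [add_smul, smul_smul, smul_smul]
          rw [hsplit, hwc, hc0', smul_zero, add_zero]
      have hlt : dist (0 : E) ((1 - t) • p) < δ := by
        rw [dist_zero_left, norm_smul, Real.norm_eq_abs, abs_of_nonneg (by linarith), hpnorm]
        nlinarith
      have := infDist_le_dist_of_mem (x := (0:E)) hq
      rw [← hδ] at this
      linarith
    · rw [affineIndependent_iff_of_fintype] at haff
      push_neg at haff
      obtain ⟨μ, hμ0, hμvs, i₁, hμi₁⟩ := haff
      have hμlin : ∑ i, μ i • g i = 0 := by
        rw [← Finset.weightedVSub_eq_linear_combination _ hμ0]; exact hμvs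
      obtain ⟨ν, hν0, hνlin, iν, hνpos⟩ :
          ∃ ν : Fin (n + 1) → ℝ, ∑ i, ν i = 0 ∧ ∑ i, ν i • g i = 0 ∧ ∃ i, 0 < ν i := by
        rcases lt_or_gt_of_ne hμi₁ with h | h
        · exact ⟨-μ, by simp only [Pi.neg_apply, Finset.sum_neg_distrib, hμ0, neg_zero],
            by simp only [Pi.neg_apply, neg_smul, Finset.sum_neg_distrib, hμlin, neg_zero],
            ⟨i₁, by simpa using h⟩⟩
        · exact ⟨μ, hμ0, hμlin, ⟨i₁, h⟩⟩
      set P := univ.filter (fun i => 0 < ν i) with hP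
      have hPne : P.Nonempty := ⟨iν, by rw [hP, Finset.mem_filter]; exact ⟨mem_univ _, hνpos⟩⟩
      obtain ⟨i₀, hi₀P, hi₀⟩ := Finset.exists_mem_eq_inf' hPne (fun i => w i / ν i)
      have hνi₀ : 0 < ν i₀ := (Finset.mem_filter.mp hi₀P).2
      set t := w i₀ / ν i₀ with htd
      have htpos : 0 < t := div_pos (hwpos i₀) hνi₀
      set w' := fun i => w i - t * ν i with hw'
      have hw'0 : ∀ i, 0 ≤ w' i := by
        intro i
        by_cases hc : 0 < ν i
        · have hle : t ≤ w i / ν i := by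
            rw [← hi₀]
            exact Finset.inf'_le (fun i => w i / ν i) (Finset.mem_filter.mpr ⟨mem_univ i, hc⟩)
          have h2 : t * ν i ≤ w i := by
            rw [← le_div_iff₀ hc]; exact hle
          show 0 ≤ w i - t * ν i
          linarith
        · push_neg at hc
          have : 0 ≤ -(t * ν i) := by nlinarith
          have := hwpos i
          simp only [hw']; linarith
      have hw'1 : ∑ i, w' i = 1 := by
        simp only [hw', Finset.sum_sub_distrib, ← Finset.mul_sum, hν0, hw1]; ring
      have hw'c : ∑ i, w' i • g i = p := by
        simp only [hw', sub_smul, Finset.sum_sub_distrib, mul_smul, ← Finset.smul_sum, hνlin,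
          smul_zero, hwc, sub_zero]
      have hw'i₀ : w' i₀ = 0 := by
        simp only [hw', htd]; field_simp; ring
      exact ⟨i₀, drop w' i₀ hw'0 hw'1 hw'c hw'i₀⟩
  obtain ⟨i₀, hp'⟩ := claim
  have hs : ∃ s ∈ S i₀, ⟪p, s⟫ ≤ 0 := by
    by_contra hc
    push_neg at hc
    obtain ⟨cw, hcw0, hcw1, hcwc⟩ := Finset.mem_convexHull'.mp (h0 i₀)
    have h1 : (0:ℝ) = ∑ y ∈ S i₀, cw y * ⟪p, y⟫ := by
      have := congrArg (fun z => ⟪p, z⟫) hcwc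
      simpa [inner_sum, real_inner_smul_right] using this.symm
    have h2 : 0 < ∑ y ∈ S i₀, cw y * ⟪p, y⟫ := by
      have hex : ∃ y ∈ S i₀, 0 < cw y := by
        by_contra hno
        push_neg at hno
        have : ∑ y ∈ S i₀, cw y ≤ 0 := Finset.sum_nonpos hno
        linarith
      obtain ⟨y, hy, hypos⟩ := hex
      refine Finset.sum_pos' (fun y hy => mul_nonneg (hcw0 y hy) (hc y hy).le) ⟨y, hy, ?_⟩
      exact mul_pos hypos (hc y hy)
    linarith
  obtain ⟨s, hsS, hsinner⟩ := hs
  set g' := Function.update g i₀ s with hg'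
  have hg'T : g' ∈ Fintype.piFinset S := by
    rw [Fintype.mem_piFinset]
    intro i
    by_cases h : i = i₀
    · subst h; rw [hg', Function.update_self]; exact hsS
    · rw [hg', Function.update_of_ne h]; exact hgS i
  set K' := convexHull ℝ (Set.range g') with hK'
  have hpK' : p ∈ K' := by
    refine convexHull_mono ?_ hp'
    rintro y ⟨i, hi, rfl⟩
    exact ⟨i, by rw [hg', Function.update_of_ne hi]⟩
  have hsK' : s ∈ K' := subset_convexHull ℝ _ ⟨i₀, by rw [hg', Function.update_self]⟩
  set A := δ ^ 2 with hA
  set Bq := ‖s‖ ^ 2 with hBq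
  have hApos : 0 < A := by positivity
  have hBnn : 0 ≤ Bq := by positivity
  set t := A / (A + Bq) with htd
  have htpos : 0 < t := div_pos hApos (by linarith)
  have htle : t ≤ 1 := by rw [htd, div_le_one (by linarith)]; linarith
  set q := (1 - t) • p + t • s with hq
  have hqK' : q ∈ K' := by
    exact (convex_convexHull ℝ _) hpK' hsK' (by linarith) (by linarith) (by ring)
  have hqnorm : ‖q‖ ^ 2 < δ ^ 2 := by
    have hexp : ‖q‖ ^ 2 = (1 - t) ^ 2 * ‖p‖ ^ 2 + 2 * ((1 - t) * t) * ⟪p, s⟫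
        + t ^ 2 * ‖s‖ ^ 2 := by
      rw [hq, norm_add_sq_real, real_inner_smul_left, real_inner_smul_right,
        norm_smul, norm_smul, Real.norm_eq_abs, Real.norm_eq_abs,
        abs_of_nonneg (by linarith : (0:ℝ) ≤ 1 - t), abs_of_nonneg (by linarith : (0:ℝ) ≤ t)]
      ring
    rw [hexp, hpnorm]
    have h1 : 2 * ((1 - t) * t) * ⟪p, s⟫ ≤ 0 := by
      apply mul_nonpos_of_nonneg_of_nonpos _ hsinner
      nlinarith
    have h2 : (1 - t) ^ 2 * δ ^ 2 + t ^ 2 * ‖s‖ ^ 2 < δ ^ 2 := by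
      rw [← hA, ← hBq]
      have hden : (0:ℝ) < A + Bq := by linarith
      have h1t : 1 - t = Bq / (A + Bq) := by rw [htd]; field_simp; ring
      rw [h1t, htd, div_pow, div_pow, div_mul_eq_mul_div, div_mul_eq_mul_div, ← add_div,
        div_lt_iff₀ (by positivity)]
      nlinarith [pow_pos hApos 3, mul_nonneg (mul_nonneg hApos.le hApos.le) hBnn,
        sq_nonneg (A + Bq)]
    linarith
  have hqlt : ‖q‖ < δ := by nlinarith [norm_nonneg q]
  have hmin := hgmin g' hg'T
  have hle : infDist (0:E) K' ≤ ‖q‖ := by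
    have := infDist_le_dist_of_mem (x := (0:E)) hqK'
    rwa [dist_zero_left] at this
  rw [← hK'] at hmin
  linarith

end ColorfulCaratheodory

section Distribute

lemma distribute_lemma {α : Type*} [DecidableEq α] (c : ℕ) {r : ℕ} (hr : 0 < r) :
    ∀ (n : ℕ) (R : Finset α), R.card = n → ∀ (Q : Fin r → Finset α),
    (∀ i j, i ≠ j → Disjoint (Q i) (Q j)) → (∀ i, Disjoint R (Q i)) →
    (∀ i, (Q i).card ≤ c) → R.card + ∑ i, (Q i).card ≤ c * r →
    ∃ P : Fin r → Finset α, (∀ i, Q i ⊆ P i) ∧ (∀ i j, i ≠ j → Disjoint (P i) (P j)) ∧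
      (∀ i, (P i).card ≤ c) ∧ Finset.univ.biUnion P = R ∪ Finset.univ.biUnion Q := by
  intro n
  induction n with
  | zero =>
    intro R hR Q hdisj hRdisj hcard hsum
    have : R = ∅ := Finset.card_eq_zero.mp hR
    subst this
    exact ⟨Q, fun i => le_refl _, hdisj, hcard, by simp⟩
  | succ n ih =>
    intro R hR Q hdisj hRdisj hcard hsum
    have hRne : R.Nonempty := Finset.card_pos.mp (by omega)
    obtain ⟨a, ha⟩ := hRne
    have hroom : ∃ i₀, (Q i₀).card < c := by
      by_contra hno
      push_neg at hno
      have hall : ∀ i, (Q i).card = c := fun i => le_antisymm (hcard i) (hno i)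
      have : ∑ i : Fin r, (Q i).card = c * r := by
        simp [hall, Finset.sum_const, Finset.card_univ, Nat.mul_comm]
      omega
    obtain ⟨i₀, hi₀⟩ := hroom
    have haQ : ∀ i, a ∉ Q i := fun i => Finset.disjoint_left.mp (hRdisj i) ha
    set Q' := Function.update Q i₀ (insert a (Q i₀)) with hQ'
    have hQ'i₀ : Q' i₀ = insert a (Q i₀) := by rw [hQ', Function.update_self]
    have hQ'ne : ∀ i, i ≠ i₀ → Q' i = Q i := fun i hi => by rw [hQ', Function.update_of_ne hi]
    have hQ'mem : ∀ i x, x ∈ Q' i ↔ (x ∈ Q i ∨ (i = i₀ ∧ x = a)) := by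
      intro i x
      by_cases h : i = i₀
      · subst h; rw [hQ'i₀, Finset.mem_insert]; tauto
      · rw [hQ'ne i h]; tauto
    obtain ⟨P, hP1, hP2, hP3, hP4⟩ := ih (R.erase a) (by rw [Finset.card_erase_of_mem ha]; omega) Q'
      (by
        intro i j hij
        rw [Finset.disjoint_left]
        intro x hxi hxj
        rw [hQ'mem] at hxi hxj
        rcases hxi with hxi | ⟨hii, hxa⟩
        · rcases hxj with hxj | ⟨hjj, hxa⟩
          · exact Finset.disjoint_left.mp (hdisj i j hij) hxi hxj
          · subst hxa; exact haQ i hxi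
        · rcases hxj with hxj | ⟨hjj, hxa'⟩
          · subst hxa; exact haQ j hxj
          · exact hij (hii.trans hjj.symm))
      (by
        intro i
        rw [Finset.disjoint_left]
        intro x hx hxQ
        rw [hQ'mem] at hxQ
        rcases hxQ with hxQ | ⟨hii, hxa⟩
        · exact Finset.disjoint_left.mp (hRdisj i) (Finset.mem_of_mem_erase hx) hxQ
        · subst hxa; exact Finset.notMem_erase _ _ hx)
      (by
        intro i
        by_cases h : i = i₀
        · rw [h, hQ'i₀, Finset.card_insert_of_notMem (haQ i₀)]; omega
        · rw [hQ'ne i h]; exact hcard i)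
      (by
        have h1 : ∑ i, (Q' i).card = (∑ i, (Q i).card) + 1 := by
          rw [← Finset.sum_erase_add Finset.univ (fun i => (Q' i).card) (Finset.mem_univ i₀),
            ← Finset.sum_erase_add Finset.univ (fun i => (Q i).card) (Finset.mem_univ i₀)]
          have e1 : ∑ i ∈ Finset.univ.erase i₀, (Q' i).card
              = ∑ i ∈ Finset.univ.erase i₀, (Q i).card :=
            Finset.sum_congr rfl fun i hi => by rw [hQ'ne i (Finset.mem_erase.mp hi).1]
          rw [e1, hQ'i₀, Finset.card_insert_of_notMem (haQ i₀)]
          omega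
        rw [Finset.card_erase_of_mem ha, h1]
        omega)
    refine ⟨P, fun i => ?_, hP2, hP3, ?_⟩
    · refine subset_trans ?_ (hP1 i)
      by_cases h : i = i₀
      · subst h; rw [hQ'i₀]; exact Finset.subset_insert _ _
      · rw [hQ'ne i h]
    · rw [hP4]
      ext x
      simp only [Finset.mem_union, Finset.mem_erase, Finset.mem_biUnion, Finset.mem_univ,
        true_and]
      constructor
      · rintro (⟨hxa, hxR⟩ | ⟨i, hi⟩)
        · exact Or.inl hxR
        · rw [hQ'mem] at hi
          rcases hi with hi | ⟨hii, hxa⟩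
          · exact Or.inr ⟨i, hi⟩
          · subst hxa; exact Or.inl ha
      · rintro (hxR | ⟨i, hi⟩)
        · by_cases hxa : x = a
          · subst hxa; exact Or.inr ⟨i₀, by rw [hQ'i₀]; exact Finset.mem_insert_self _ _⟩
          · exact Or.inl ⟨hxa, hxR⟩
        · exact Or.inr ⟨i, by rw [hQ'mem]; exact Or.inl hi⟩

end Distribute

section Sarkaria

/-- The lift of a point of `ℝ^d` to `ℝ^{d+1}` with last coordinate `1`. -/
noncomputable def tvxh (d : ℕ) (y : EuclideanSpace ℝ (Fin d)) : Fin (d+1) → ℝ :=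
  fun a => if h : (a:ℕ) < d then y ⟨a, h⟩ else 1

/-- Vectors `v_0, …, v_{r-1}` in `ℝ^{r-1}` summing to zero. -/
noncomputable def tvv (r : ℕ) : Fin r → Fin (r-1) → ℝ :=
  fun j b => if (j:ℕ) = r - 1 then -1 else if (j:ℕ) = (b:ℕ) then 1 else 0

/-- The Sarkaria tensor points. -/
noncomputable def tvT (d r : ℕ) (y : EuclideanSpace ℝ (Fin d)) (j : Fin r) :
    EuclideanSpace ℝ (Fin (d+1) × Fin (r-1)) :=
  WithLp.toLp 2 (fun q => tvxh d y q.1 * tvv r j q.2)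

lemma euclid_sum_apply {ι κ : Type*} [Fintype κ] (s : Finset ι)
    (f : ι → EuclideanSpace ℝ κ) (q : κ) :
    (∑ i ∈ s, f i) q = ∑ i ∈ s, f i q := by
  have h := map_sum (PiLp.projₗ 2 (𝕜 := ℝ) (fun _ : κ => ℝ) q) f s
  simp only [PiLp.projₗ_apply] at h
  exact h

lemma tv_v_sum {r : ℕ} (c : Fin r → ℝ) (b : Fin (r-1)) (jb jl : Fin r)
    (hjb : (jb:ℕ) = (b:ℕ)) (hjl : (jl:ℕ) = r - 1) :
    ∑ j, c j * tvv r j b = c jb - c jl := by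
  have hblt : (b:ℕ) < r - 1 := b.isLt
  have hne : jb ≠ jl := by
    intro h
    rw [h, hjl] at hjb
    omega
  have hpt : ∀ j : Fin r, c j * tvv r j b
      = (if j = jb then c j else 0) - (if j = jl then c j else 0) := by
    intro j
    by_cases h1 : j = jl
    · subst h1
      rw [tvv, if_pos hjl, if_neg (Ne.symm hne).elim, if_pos rfl]
      · ring
    · by_cases h2 : j = jb
      · subst h2
        rw [tvv, if_neg (fun hc => h1 (Fin.ext (by omega))), if_pos hjb,
          if_pos rfl, if_neg h1]
        ring
      · rw [tvv, if_neg (fun hc => h1 (Fin.ext (by omega))),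
          if_neg (fun hc => h2 (Fin.ext (by omega))), if_neg h2, if_neg h1]
        ring
  rw [Finset.sum_congr rfl (fun j _ => hpt j), Finset.sum_sub_distrib]
  simp

end Sarkaria

set_option maxHeartbeats 2000000 in
/-- Tverberg's theorem with parts of size at most `d+1`: if
`(d+1)(r-1)+1 ≤ |X| ≤ (d+1)r`, then `X` can be partitioned into `r` pairwise
disjoint sets, each of size at most `d+1`, whose convex hulls share a common
point. -/
theorem tverberg_small_parts (d r : ℕ) (hd : 1 ≤ d) (hr : 1 ≤ r)
    (X : Finset (EuclideanSpace ℝ (Fin d)))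
    (hcard₁ : (d + 1) * (r - 1) + 1 ≤ X.card)
    (hcard₂ : X.card ≤ (d + 1) * r) :
    ∃ P : Fin r → Finset (EuclideanSpace ℝ (Fin d)),
      (∀ i j, i ≠ j → Disjoint (P i) (P j)) ∧
      (X : Set (EuclideanSpace ℝ (Fin d))) = ⋃ i, ↑(P i) ∧
      (∀ i, (P i).card ≤ d + 1) ∧
      ∃ o : EuclideanSpace ℝ (Fin d),
        ∀ i, o ∈ convexHull ℝ (↑(P i) : Set (EuclideanSpace ℝ (Fin d))) := by
  classical
  obtain ⟨Y, hYX, hYcard⟩ := Finset.exists_subset_card_eq hcard₁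
  have hYc : Fintype.card {y // y ∈ Y} = (d + 1) * (r - 1) + 1 := by
    rw [Fintype.card_coe, hYcard]
  let e := Fintype.equivFinOfCardEq hYc
  set x : Fin ((d + 1) * (r - 1) + 1) → EuclideanSpace ℝ (Fin d) :=
    fun i => ((e.symm i : {y // y ∈ Y}) : EuclideanSpace ℝ (Fin d)) with hx
  have hxinj : Function.Injective x := fun i j h => by
    have := Subtype.ext (p := fun y => y ∈ Y) h
    exact e.symm.injective this
  have hxX : ∀ i, x i ∈ X := fun i => hYX (e.symm i).2
  -- tensor space
  have hrank : Module.finrank ℝ (EuclideanSpace ℝ (Fin (d+1) × Fin (r-1))) ≤ (d + 1) * (r - 1) := by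
    rw [finrank_euclideanSpace]
    simp [Fintype.card_prod]
  set S : Fin ((d + 1) * (r - 1) + 1) → Finset (EuclideanSpace ℝ (Fin (d+1) × Fin (r-1))) :=
    fun i => Finset.univ.image (tvT d r (x i)) with hS
  have hS0 : ∀ i, (0 : EuclideanSpace ℝ (Fin (d+1) × Fin (r-1)))
      ∈ convexHull ℝ (S i : Set (EuclideanSpace ℝ (Fin (d+1) × Fin (r-1)))) := by
    intro i
    apply mem_convexHull_of_exists_fintype (ι := Fin r) (fun _ => (r:ℝ)⁻¹) (tvT d r (x i))
    · intro j; positivity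
    · rw [Finset.sum_const, Finset.card_univ, Fintype.card_fin, nsmul_eq_mul]
      field_simp
    · intro j
      exact Finset.mem_coe.mpr (Finset.mem_image_of_mem _ (Finset.mem_univ j))
    · ext q
      rw [euclid_sum_apply]
      simp only [PiLp.smul_apply, smul_eq_mul, tvT, PiLp.toLp_apply]
      have h := tv_v_sum (fun _ : Fin r => (r:ℝ)⁻¹ * tvxh d (x i) q.1) q.2
        ⟨(q.2 : ℕ), by have := q.2.isLt; omega⟩ ⟨r - 1, by omega⟩ rfl rfl
      calc ∑ j : Fin r, (r:ℝ)⁻¹ * (tvxh d (x i) q.1 * tvv r j q.2)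
          = ∑ j : Fin r, ((r:ℝ)⁻¹ * tvxh d (x i) q.1) * tvv r j q.2 := by
            refine Finset.sum_congr rfl fun j _ => by ring
        _ = 0 := by rw [h]; ring
  obtain ⟨g, hgS, hg0⟩ := colorful_caratheodory hrank S hS0
  have hgS' : ∀ i, ∃ j : Fin r, tvT d r (x i) j = g i := by
    intro i
    obtain ⟨j, _, hj⟩ := Finset.mem_image.mp (hgS i)
    exact ⟨j, hj⟩
  choose jj hjj using hgS'
  obtain ⟨lam, hlam0, hlam1, hlamc⟩ := exists_weights_of_mem_convexHull_range hg0
  have hlamT : ∑ i, lam i • tvT d r (x i) (jj i) = 0 := by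
    rw [← hlamc]
    exact Finset.sum_congr rfl fun i _ => by rw [hjj]
  -- coordinates
  have hcoord : ∀ q : Fin (d+1) × Fin (r-1),
      ∑ i, lam i * (tvxh d (x i) q.1 * tvv r (jj i) q.2) = 0 := by
    intro q
    have h := congrArg
      (fun u : EuclideanSpace ℝ (Fin (d+1) × Fin (r-1)) => u q) hlamT
    simp only at h
    rw [euclid_sum_apply] at h
    simpa only [PiLp.smul_apply, smul_eq_mul, tvT, PiLp.toLp_apply, PiLp.zero_apply] using h
  -- fibers
  set A : Fin r → Finset (Fin ((d + 1) * (r - 1) + 1)) :=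
    fun jv => Finset.univ.filter (fun i => jj i = jv) with hA
  set z : Fin r → Fin (d+1) → ℝ :=
    fun jv a => ∑ i ∈ A jv, lam i * tvxh d (x i) a with hz
  have hzv : ∀ (a : Fin (d+1)) (b : Fin (r-1)), ∑ jv : Fin r, z jv a * tvv r jv b = 0 := by
    intro a b
    have h1 : ∑ i, lam i * (tvxh d (x i) a * tvv r (jj i) b)
        = ∑ jv : Fin r, ∑ i ∈ A jv, lam i * (tvxh d (x i) a * tvv r (jj i) b) :=
      (Finset.sum_fiberwise _ _ _).symm
    have h2 : ∀ jv : Fin r, ∑ i ∈ A jv, lam i * (tvxh d (x i) a * tvv r (jj i) b)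
        = z jv a * tvv r jv b := by
      intro jv
      rw [hz]
      simp only
      rw [Finset.sum_mul]
      refine Finset.sum_congr rfl fun i hi => ?_
      have : jj i = jv := by
        simp only [hA, Finset.mem_filter] at hi
        exact hi.2
      rw [this]; ring
    rw [← Finset.sum_congr rfl (fun jv _ => h2 jv), ← h1, hcoord (a, b)]
  set jlast : Fin r := ⟨r - 1, by omega⟩ with hjlast
  have hzeq : ∀ (jv : Fin r) (a : Fin (d+1)), z jv a = z jlast a := by
    intro jv a
    by_cases hv : jv = jlast
    · rw [hv]
    · have hlt : (jv : ℕ) < r - 1 := by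
        have h1 : (jv : ℕ) < r := jv.isLt
        have h2 : (jv : ℕ) ≠ r - 1 := fun h => hv (Fin.ext (by rw [h, hjlast]))
        omega
      have h := tv_v_sum (fun jv' => z jv' a) ⟨(jv : ℕ), hlt⟩ jv jlast rfl rfl
      rw [hzv a ⟨(jv : ℕ), hlt⟩] at h
      linarith [h.symm]
  set lastA : Fin (d+1) := ⟨d, by omega⟩ with hlastA
  have hxh_last : ∀ y, tvxh d y lastA = 1 := by
    intro y
    rw [tvxh]
    rw [dif_neg (by simp [hlastA])]
  have hxh_lt : ∀ (y : EuclideanSpace ℝ (Fin d)) (aext : Fin (d+1)) (a : Fin d),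
      (aext : ℕ) = (a : ℕ) → tvxh d y aext = y a := by
    intro y aext a haext
    rw [tvxh]
    rw [dif_pos (by omega : (aext : ℕ) < d)]
    exact congrArg (fun k => y k) (Fin.ext haext)
  have hAsum : ∀ jv, ∑ i ∈ A jv, lam i = z jv lastA := by
    intro jv
    rw [hz]
    simp only
    refine Finset.sum_congr rfl fun i _ => ?_
    rw [hxh_last, mul_one]
  have hsum1 : ∑ jv : Fin r, z jv lastA = 1 := by
    rw [← hlam1]
    rw [← Finset.sum_fiberwise Finset.univ jj (fun i => lam i)]
    exact Finset.sum_congr rfl fun jv _ => (hAsum jv).symm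
  set sval : ℝ := z jlast lastA with hsval
  have hrs : (r : ℝ) * sval = 1 := by
    rw [← hsum1]
    rw [Finset.sum_congr rfl (fun jv _ => hzeq jv lastA)]
    rw [Finset.sum_const, Finset.card_univ, Fintype.card_fin, nsmul_eq_mul]
  have hspos : 0 < sval := by
    have hr0 : (0:ℝ) < r := by exact_mod_cast hr
    nlinarith
  have hAsum' : ∀ jv, ∑ i ∈ A jv, lam i = sval := fun jv => by
    rw [hAsum jv, hzeq jv lastA, hsval]
  -- the common point
  set o : EuclideanSpace ℝ (Fin d) := (A jlast).centerMass lam x with ho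
  have hcm : ∀ jv, (A jv).centerMass lam x = o := by
    intro jv
    rw [ho, Finset.centerMass, Finset.centerMass, hAsum' jv, hAsum' jlast]
    congr 1
    ext a
    rw [euclid_sum_apply, euclid_sum_apply]
    simp only [PiLp.smul_apply, smul_eq_mul]
    have e1 : ∀ jv' : Fin r, ∑ i ∈ A jv', lam i * x i a = z jv' ⟨(a:ℕ), by omega⟩ := by
      intro jv'
      rw [hz]
      simp only
      refine Finset.sum_congr rfl fun i _ => ?_
      rw [hxh_lt (x i) ⟨(a:ℕ), by omega⟩ a rfl]
    rw [e1 jv, e1 jlast, hzeq jv]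
  have homem : ∀ jv, o ∈ convexHull ℝ (((A jv).image x : Finset (EuclideanSpace ℝ (Fin d))) :
      Set (EuclideanSpace ℝ (Fin d))) := by
    intro jv
    rw [← hcm jv]
    refine Finset.centerMass_mem_convexHull _ (fun i _ => hlam0 i) ?_ ?_
    · rw [hAsum' jv]; exact hspos
    · intro i hi
      exact Finset.mem_coe.mpr (Finset.mem_image_of_mem x hi)
  -- Carathéodory shrinking
  have hshrink : ∀ jv, ∃ Q : Finset (EuclideanSpace ℝ (Fin d)),
      Q ⊆ (A jv).image x ∧ Q.card ≤ d + 1 ∧ o ∈ convexHull ℝ (Q : Set (EuclideanSpace ℝ (Fin d))) := by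
    intro jv
    have h := homem jv
    rw [convexHull_eq_union] at h
    simp only [Set.mem_iUnion] at h
    obtain ⟨t, hts, hai, hmem⟩ := h
    refine ⟨t, by exact_mod_cast hts, ?_, hmem⟩
    have hcard := hai.card_le_finrank_succ
    have hle2 := Submodule.finrank_le (vectorSpan ℝ (Set.range ((↑) : {u // u ∈ t} → EuclideanSpace ℝ (Fin d))))
    rw [Fintype.card_coe] at hcard
    have hfr : Module.finrank ℝ (EuclideanSpace ℝ (Fin d)) = d := by
      rw [finrank_euclideanSpace, Fintype.card_fin]
    omega
  choose Q hQsub hQcard hQo using hshrink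
  have hAdisj : ∀ i j : Fin r, i ≠ j → Disjoint (A i) (A j) := by
    intro i j hij
    rw [Finset.disjoint_left]
    intro k hk1 hk2
    rw [hA] at hk1 hk2
    exact hij (((Finset.mem_filter.mp hk1).2).symm.trans (Finset.mem_filter.mp hk2).2)
  have hQdisj : ∀ i j : Fin r, i ≠ j → Disjoint (Q i) (Q j) := by
    intro i j hij
    refine Finset.disjoint_of_subset_left (hQsub i) (Finset.disjoint_of_subset_right (hQsub j) ?_)
    rw [Finset.disjoint_image hxinj]
    exact hAdisj i j hij
  have hQX : ∀ jv, Q jv ⊆ X := by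
    intro jv
    refine (hQsub jv).trans ?_
    intro y hy
    obtain ⟨i, _, rfl⟩ := Finset.mem_image.mp hy
    exact hxX i
  set B := Finset.univ.biUnion Q with hB
  have hBX : B ⊆ X := Finset.biUnion_subset.mpr fun jv _ => hQX jv
  have hBcard : B.card = ∑ jv, (Q jv).card := Finset.card_biUnion (fun i _ j _ h => hQdisj i j h)
  set R := X \ B with hR
  have hRdisj : ∀ jv, Disjoint R (Q jv) := by
    intro jv
    rw [Finset.disjoint_left]
    intro y hy hyQ
    exact (Finset.mem_sdiff.mp hy).2 (Finset.mem_biUnion.mpr ⟨jv, Finset.mem_univ _, hyQ⟩)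
  have hsumle : R.card + ∑ jv, (Q jv).card ≤ (d + 1) * r := by
    have h1 : R.card = X.card - B.card := Finset.card_sdiff_of_subset hBX
    have h2 : B.card ≤ X.card := Finset.card_le_card hBX
    omega
  obtain ⟨P, hQP, hPdisj, hPcard, hPunion⟩ :=
    distribute_lemma (d + 1) hr R.card R rfl Q hQdisj hRdisj hQcard hsumle
  have hXeq : Finset.univ.biUnion P = X := by
    rw [hPunion, ← hB, hR, Finset.sdiff_union_of_subset hBX]
  refine ⟨P, hPdisj, ?_, hPcard, o, ?_⟩
  · ext y
    simp only [Set.mem_iUnion, Finset.mem_coe]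
    rw [← hXeq]
    rw [Finset.mem_biUnion]
    simp
  · intro jv
    exact convexHull_mono (by exact_mod_cast hQP jv) (hQo jv)
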